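/- Let (W_0, …, W_ℓ) be a ReLU network with m_0 input nodes, ℓ ≥ 1 hidden layers with m_1, …, m_ℓ hidden layer nodes, and a single output node, and let f_{ℓ+1}(x) denote its output value on x ∈ {0,1}^{m_0}. Then: (1) if (W_0, …, W_ℓ) is (ε, δ)-close to computing the constant 0-function, then for at least a (1 − δ)-fraction of the inputs x ∈ {0,1}^{m_0} the output value satisfies f_{ℓ+1}(x) ≤ 2·(ℓ+1)·ε·∏_{i=0}^ℓ m_i; and (2) if (W_0, …, W_ℓ) is (ε, δ)-close to computing the OR-function, then for at least a (1 − δ)-fraction of the inputs the output value satisfies f_{ℓ+1}(x) ≥ −2·(ℓ+1)·ε·∏_{i=0}^ℓ m_i. -/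
import Mathlib


open scoped Classical
open Finset

noncomputable section

/-- The ReLU activation function. -/
def relu (z : ℝ) : ℝ := max z 0

/-- Interpret a Boolean vector as a real 0/1 vector. -/
def bv {n : ℕ} (x : Fin n → Bool) : Fin n → ℝ := fun i => if x i then 1 else 0

/-- The values `f_i(x)` at the nodes of layer `i` of the multilayer ReLU network
`(W 0, W 1, …)` with layer sizes `m 0, m 1, …`: `f_0(x) = x` and
`f_{i+1}(x) = W_i · relu(f_i(x))`. -/
def netSeq (m : ℕ → ℕ) (W : ∀ i : ℕ, Matrix (Fin (m (i + 1))) (Fin (m i)) ℝ)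
    (x : Fin (m 0) → ℝ) : (i : ℕ) → Fin (m i) → ℝ
  | 0 => x
  | i + 1 => fun j => ∑ k, W i j k * relu (netSeq m W x i k)

/-- The output value `f_{ℓ+1}(x)` of a ReLU network with `ℓ` hidden layers and a single
output node (`m (ℓ+1) = 1`), written as the sum over the (single) output coordinate. -/
def outVal (ℓ : ℕ) (m : ℕ → ℕ) (W : ∀ i : ℕ, Matrix (Fin (m (i + 1))) (Fin (m i)) ℝ)
    (x : Fin (m 0) → Bool) : ℝ :=
  ∑ j, netSeq m W (bv x) (ℓ + 1) j

/-- The multilayer ReLU network `(W 0, …, W ℓ)` is `(ε, δ)`-close to computing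
`f : {0,1}^{m 0} → {0,1}`: one can change each matrix `W i` (`0 ≤ i ≤ ℓ`) in at most
`ε · m i · m (i+1)` entries (staying in `[-1,1]`) so that the Boolean function computed by
the resulting network disagrees with `f` on at most a `δ`-fraction of the `2^{m 0}` inputs. -/
def IsCloseML (ℓ : ℕ) (m : ℕ → ℕ) (W : ∀ i : ℕ, Matrix (Fin (m (i + 1))) (Fin (m i)) ℝ)
    (ε δ : ℝ) (f : (Fin (m 0) → Bool) → Bool) : Prop :=
  ∃ W' : ∀ i : ℕ, Matrix (Fin (m (i + 1))) (Fin (m i)) ℝ,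
    (∀ i ≤ ℓ, ∀ j k, |W' i j k| ≤ 1) ∧
    (∀ i ≤ ℓ,
      ((Finset.univ.filter
          (fun p : Fin (m (i + 1)) × Fin (m i) => W' i p.1 p.2 ≠ W i p.1 p.2)).card : ℝ)
        ≤ ε * m i * m (i + 1)) ∧
    (((Finset.univ.filter
        (fun x : Fin (m 0) → Bool => decide (0 < outVal ℓ m W' x) ≠ f x)).card : ℝ)
      ≤ δ * 2 ^ (m 0))

lemma relu_nonneg (z : ℝ) : 0 ≤ relu z := le_max_right z 0
lemma relu_le_abs (z : ℝ) : relu z ≤ |z| := max_le (le_abs_self z) (abs_nonneg z)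
lemma abs_relu_sub_relu (a b : ℝ) : |relu a - relu b| ≤ |a - b| :=
  abs_max_sub_max_le_abs a b 0

lemma netSeq_succ (m : ℕ → ℕ) (W : ∀ i : ℕ, Matrix (Fin (m (i + 1))) (Fin (m i)) ℝ)
    (x : Fin (m 0) → ℝ) (i : ℕ) (j : Fin (m (i+1))) :
    netSeq m W x (i+1) j = ∑ k, W i j k * relu (netSeq m W x i k) := rfl

lemma netSeq_bound (m : ℕ → ℕ) (W : ∀ i : ℕ, Matrix (Fin (m (i + 1))) (Fin (m i)) ℝ)
    (x : Fin (m 0) → ℝ) (hx : ∀ k, |x k| ≤ 1) :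
    ∀ i : ℕ, (∀ i' < i, ∀ j k, |W i' j k| ≤ 1) →
      ∀ k, |netSeq m W x i k| ≤ ∏ j ∈ Finset.range i, (m j : ℝ) := by
  intro i
  induction i with
  | zero => intro _ k; simpa [netSeq] using hx k
  | succ i ih =>
    intro hW j
    have hWi : ∀ i' < i, ∀ j k, |W i' j k| ≤ 1 :=
      fun i' h => hW i' (h.trans (Nat.lt_succ_self i))
    have hM : (0:ℝ) ≤ ∏ j ∈ Finset.range i, (m j : ℝ) :=
      Finset.prod_nonneg fun _ _ => Nat.cast_nonneg _
    calc |netSeq m W x (i+1) j| = |∑ k, W i j k * relu (netSeq m W x i k)| := rfl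
      _ ≤ ∑ k, |W i j k * relu (netSeq m W x i k)| := Finset.abs_sum_le_sum_abs _ _
      _ ≤ ∑ _k : Fin (m i), ∏ j ∈ Finset.range i, (m j : ℝ) := by
          apply Finset.sum_le_sum
          intro k _
          rw [abs_mul]
          have h1 : |relu (netSeq m W x i k)| ≤ ∏ j ∈ Finset.range i, (m j : ℝ) := by
            rw [abs_of_nonneg (relu_nonneg _)]
            exact (relu_le_abs _).trans (ih hWi k)
          have h2 := hW i (Nat.lt_succ_self i) j k
          nlinarith [abs_nonneg (W i j k), abs_nonneg (relu (netSeq m W x i k))]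
      _ = (m i : ℝ) * ∏ j ∈ Finset.range i, (m j : ℝ) := by
          simp [Finset.sum_const, Finset.card_univ, mul_comm]
      _ = ∏ j ∈ Finset.range (i+1), (m j : ℝ) := by
          rw [Finset.prod_range_succ]; ring

lemma netSeq_diff (m : ℕ → ℕ) (W W' : ∀ i : ℕ, Matrix (Fin (m (i + 1))) (Fin (m i)) ℝ)
    (ε : ℝ) (x : Fin (m 0) → ℝ) (hx : ∀ k, |x k| ≤ 1) :
    ∀ i : ℕ, (∀ i' < i, ∀ j k, |W i' j k| ≤ 1) → (∀ i' < i, ∀ j k, |W' i' j k| ≤ 1) →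
      (∀ i' < i, ((Finset.univ.filter
          (fun p : Fin (m (i' + 1)) × Fin (m i') => W' i' p.1 p.2 ≠ W i' p.1 p.2)).card : ℝ)
        ≤ ε * m i' * m (i' + 1)) →
      ∑ j, |netSeq m W x i j - netSeq m W' x i j|
        ≤ 2 * ε * i * ∏ j ∈ Finset.range (i+1), (m j : ℝ) := by
  intro i
  induction i with
  | zero => intro _ _ _; simp [netSeq]
  | succ i ih =>
    intro hW hW' hc
    have hWi : ∀ i' < i, ∀ j k, |W i' j k| ≤ 1 :=
      fun i' h => hW i' (h.trans (Nat.lt_succ_self i))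
    have hW'i : ∀ i' < i, ∀ j k, |W' i' j k| ≤ 1 :=
      fun i' h => hW' i' (h.trans (Nat.lt_succ_self i))
    have hci : ∀ i' < i, ((Finset.univ.filter
          (fun p : Fin (m (i' + 1)) × Fin (m i') => W' i' p.1 p.2 ≠ W i' p.1 p.2)).card : ℝ)
        ≤ ε * m i' * m (i' + 1) :=
      fun i' h => hc i' (h.trans (Nat.lt_succ_self i))
    set M : ℝ := ∏ j ∈ Finset.range i, (m j : ℝ) with hMdef
    have hM : (0:ℝ) ≤ M := Finset.prod_nonneg fun _ _ => Nat.cast_nonneg _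
    set D : ℝ := ∑ k, |netSeq m W x i k - netSeq m W' x i k| with hDdef
    have hD := ih hWi hW'i hci
    -- pointwise bound on each output coordinate
    have key : ∀ j : Fin (m (i+1)),
        |netSeq m W x (i+1) j - netSeq m W' x (i+1) j|
          ≤ (∑ k, |W i j k - W' i j k| * relu (netSeq m W x i k)) + D := by
      intro j
      have : netSeq m W x (i+1) j - netSeq m W' x (i+1) j
          = ∑ k, ((W i j k - W' i j k) * relu (netSeq m W x i k)
              + W' i j k * (relu (netSeq m W x i k) - relu (netSeq m W' x i k))) := by
        rw [netSeq_succ, netSeq_succ, ← Finset.sum_sub_distrib]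
        congr 1; funext k; ring
      rw [this]
      calc _ ≤ ∑ k, |(W i j k - W' i j k) * relu (netSeq m W x i k)
              + W' i j k * (relu (netSeq m W x i k) - relu (netSeq m W' x i k))| :=
            Finset.abs_sum_le_sum_abs _ _
        _ ≤ ∑ k, (|W i j k - W' i j k| * relu (netSeq m W x i k)
              + |netSeq m W x i k - netSeq m W' x i k|) := by
            apply Finset.sum_le_sum
            intro k _
            have h1 := abs_add_le ((W i j k - W' i j k) * relu (netSeq m W x i k))
              (W' i j k * (relu (netSeq m W x i k) - relu (netSeq m W' x i k)))
            have h2 : |(W i j k - W' i j k) * relu (netSeq m W x i k)|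
                = |W i j k - W' i j k| * relu (netSeq m W x i k) := by
              rw [abs_mul, abs_of_nonneg (relu_nonneg _)]
            have h3 : |W' i j k * (relu (netSeq m W x i k) - relu (netSeq m W' x i k))|
                ≤ |netSeq m W x i k - netSeq m W' x i k| := by
              rw [abs_mul]
              have h4 := hW' i (Nat.lt_succ_self i) j k
              have h5 := abs_relu_sub_relu (netSeq m W x i k) (netSeq m W' x i k)
              nlinarith [abs_nonneg (W' i j k),
                abs_nonneg (relu (netSeq m W x i k) - relu (netSeq m W' x i k))]
            linarith
        _ = (∑ k, |W i j k - W' i j k| * relu (netSeq m W x i k)) + D := by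
            rw [Finset.sum_add_distrib]
      -- done
    have sum1 : ∑ j, ∑ k, |W i j k - W' i j k| * relu (netSeq m W x i k)
        ≤ 2 * ε * (m i : ℝ) * (m (i+1) : ℝ) * M := by
      have step1 : ∑ j, ∑ k, |W i j k - W' i j k| * relu (netSeq m W x i k)
          ≤ ∑ j, ∑ k, |W i j k - W' i j k| * M := by
        apply Finset.sum_le_sum; intro j _
        apply Finset.sum_le_sum; intro k _
        have hr : relu (netSeq m W x i k) ≤ M :=
          (relu_le_abs _).trans (netSeq_bound m W x hx i hWi k)
        exact mul_le_mul_of_nonneg_left hr (abs_nonneg _)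
      have step2 : ∑ j, ∑ k, |W i j k - W' i j k| * M
          = (∑ p : Fin (m (i+1)) × Fin (m i), |W i p.1 p.2 - W' i p.1 p.2|) * M := by
        rw [Finset.sum_mul, Fintype.sum_prod_type]
      have step3 : ∑ p : Fin (m (i+1)) × Fin (m i), |W i p.1 p.2 - W' i p.1 p.2|
          ≤ 2 * (ε * m i * m (i+1)) := by
        have heq : ∑ p : Fin (m (i+1)) × Fin (m i), |W i p.1 p.2 - W' i p.1 p.2|
            = ∑ p ∈ Finset.univ.filter
                (fun p : Fin (m (i + 1)) × Fin (m i) => W' i p.1 p.2 ≠ W i p.1 p.2),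
                |W i p.1 p.2 - W' i p.1 p.2| := by
          refine (Finset.sum_subset (Finset.filter_subset _ _) ?_).symm
          intro p _ hp
          simp only [Finset.mem_filter, Finset.mem_univ, true_and, not_not] at hp
          simp [hp]
        rw [heq]
        calc _ ≤ ∑ p ∈ Finset.univ.filter
                (fun p : Fin (m (i + 1)) × Fin (m i) => W' i p.1 p.2 ≠ W i p.1 p.2), (2:ℝ) := by
              apply Finset.sum_le_sum
              intro p _
              have h1 := hW i (Nat.lt_succ_self i) p.1 p.2
              have h2 := hW' i (Nat.lt_succ_self i) p.1 p.2
              have := abs_sub (W i p.1 p.2) (W' i p.1 p.2)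
              linarith
          _ = 2 * ((Finset.univ.filter
                (fun p : Fin (m (i + 1)) × Fin (m i) => W' i p.1 p.2 ≠ W i p.1 p.2)).card : ℝ) := by
              rw [Finset.sum_const]; push_cast; ring
          _ ≤ 2 * (ε * m i * m (i+1)) := by
              have := hc i (Nat.lt_succ_self i)
              linarith
      calc ∑ j, ∑ k, |W i j k - W' i j k| * relu (netSeq m W x i k)
          ≤ (∑ p : Fin (m (i+1)) × Fin (m i), |W i p.1 p.2 - W' i p.1 p.2|) * M := by
            rw [← step2]; exact step1
        _ ≤ 2 * (ε * m i * m (i+1)) * M := by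
            apply mul_le_mul_of_nonneg_right step3 hM
        _ = 2 * ε * (m i : ℝ) * (m (i+1) : ℝ) * M := by ring
    have hp1 : ∏ j ∈ Finset.range (i+1), (m j : ℝ) = M * m i := by
      rw [Finset.prod_range_succ]
    have hp2 : ∏ j ∈ Finset.range (i+2), (m j : ℝ) = M * m i * m (i+1) := by
      rw [Finset.prod_range_succ, Finset.prod_range_succ]
    have hfin : ∑ j, |netSeq m W x (i+1) j - netSeq m W' x (i+1) j|
        ≤ 2 * ε * ((i:ℝ)+1) * ∏ j ∈ Finset.range (i+2), (m j : ℝ) := calc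
      ∑ j, |netSeq m W x (i+1) j - netSeq m W' x (i+1) j|
        ≤ ∑ j, ((∑ k, |W i j k - W' i j k| * relu (netSeq m W x i k)) + D) :=
          Finset.sum_le_sum fun j _ => key j
      _ = (∑ j, ∑ k, |W i j k - W' i j k| * relu (netSeq m W x i k)) + (m (i+1) : ℝ) * D := by
          rw [Finset.sum_add_distrib, Finset.sum_const, Finset.card_univ, Fintype.card_fin,
            nsmul_eq_mul]
      _ ≤ 2 * ε * (m i : ℝ) * (m (i+1) : ℝ) * M
            + (m (i+1) : ℝ) * (2 * ε * i * ∏ j ∈ Finset.range (i+1), (m j : ℝ)) := by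
          have := mul_le_mul_of_nonneg_left hD (Nat.cast_nonneg (m (i+1)) : (0:ℝ) ≤ m (i+1))
          linarith
      _ = 2 * ε * ((i:ℝ)+1) * ∏ j ∈ Finset.range (i+2), (m j : ℝ) := by
          rw [hp1, hp2]; ring
    refine hfin.trans (le_of_eq ?_)
    push_cast; ring

lemma bv_abs_le {n : ℕ} (x : Fin n → Bool) : ∀ k, |bv x k| ≤ 1 := by
  intro k; unfold bv; split <;> simp

lemma netSeq_zero_input (m : ℕ → ℕ) (W : ∀ i : ℕ, Matrix (Fin (m (i + 1))) (Fin (m i)) ℝ) :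
    ∀ i (k : Fin (m i)), netSeq m W (fun _ => 0) i k = 0 := by
  intro i
  induction i with
  | zero => intro k; rfl
  | succ i ih => intro k; simp [netSeq, ih, relu]

lemma outVal_zero (ℓ : ℕ) (m : ℕ → ℕ) (W : ∀ i : ℕ, Matrix (Fin (m (i + 1))) (Fin (m i)) ℝ)
    (x : Fin (m 0) → Bool) (hx : ∀ i, x i = false) : outVal ℓ m W x = 0 := by
  have hbv : bv x = fun _ => 0 := by funext i; simp [bv, hx i]
  unfold outVal
  rw [hbv]
  simp [netSeq_zero_input]

lemma count_helper {n : ℕ} (δ : ℝ) (S T : Finset (Fin n → Bool))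
    (hS : (S.card : ℝ) ≤ δ * 2 ^ n) (hsub : ∀ x, x ∉ S → x ∈ T) :
    (1 - δ) * 2 ^ n ≤ (T.card : ℝ) := by
  have h1 : Sᶜ ⊆ T := fun x hx => hsub x (Finset.mem_compl.mp hx)
  have h3 := Finset.card_le_card h1
  have h2 : Sᶜ.card = Fintype.card (Fin n → Bool) - S.card := Finset.card_compl S
  have h4 : S.card ≤ Fintype.card (Fin n → Bool) := Finset.card_le_univ S
  have h5 : Fintype.card (Fin n → Bool) = 2 ^ n := by
    simp [Fintype.card_fun]
  have h6 : ((Sᶜ.card : ℝ)) = 2 ^ n - S.card := by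
    rw [h2, Nat.cast_sub h4, h5]; push_cast; ring
  have h7 : (Sᶜ.card : ℝ) ≤ T.card := by exact_mod_cast h3
  linarith

lemma outVal_diff_le (ℓ : ℕ) (m : ℕ → ℕ) (hm : m (ℓ + 1) = 1)
    (W W' : ∀ i : ℕ, Matrix (Fin (m (i + 1))) (Fin (m i)) ℝ)
    (hW : ∀ i ≤ ℓ, ∀ j k, |W i j k| ≤ 1) (hW' : ∀ i ≤ ℓ, ∀ j k, |W' i j k| ≤ 1)
    (ε : ℝ)
    (hc : ∀ i ≤ ℓ,
      ((Finset.univ.filter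
          (fun p : Fin (m (i + 1)) × Fin (m i) => W' i p.1 p.2 ≠ W i p.1 p.2)).card : ℝ)
        ≤ ε * m i * m (i + 1)) (x : Fin (m 0) → Bool) :
    |outVal ℓ m W x - outVal ℓ m W' x|
      ≤ 2 * ((ℓ : ℝ) + 1) * ε * ∏ i ∈ Finset.range (ℓ + 1), (m i : ℝ) := by
  have hdiff := netSeq_diff m W W' ε (bv x) (bv_abs_le x) (ℓ+1)
    (fun i' h => hW i' (Nat.lt_succ_iff.mp h))
    (fun i' h => hW' i' (Nat.lt_succ_iff.mp h))
    (fun i' h => hc i' (Nat.lt_succ_iff.mp h))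
  have h1 : |outVal ℓ m W x - outVal ℓ m W' x|
      ≤ ∑ j, |netSeq m W (bv x) (ℓ+1) j - netSeq m W' (bv x) (ℓ+1) j| := by
    unfold outVal
    rw [← Finset.sum_sub_distrib]
    exact Finset.abs_sum_le_sum_abs _ _
  have h2 : ∏ j ∈ Finset.range (ℓ+2), (m j : ℝ) = ∏ j ∈ Finset.range (ℓ+1), (m j : ℝ) := by
    rw [Finset.prod_range_succ, hm]; simp
  have := h1.trans hdiff
  rw [h2] at this
  refine this.trans (le_of_eq ?_)
  push_cast; ring

lemma diff_nonneg_bound (ℓ : ℕ) (m : ℕ → ℕ) (hm : m (ℓ + 1) = 1)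
    (W W' : ∀ i : ℕ, Matrix (Fin (m (i + 1))) (Fin (m i)) ℝ)
    (hW : ∀ i ≤ ℓ, ∀ j k, |W i j k| ≤ 1) (hW' : ∀ i ≤ ℓ, ∀ j k, |W' i j k| ≤ 1)
    (ε : ℝ)
    (hc : ∀ i ≤ ℓ,
      ((Finset.univ.filter
          (fun p : Fin (m (i + 1)) × Fin (m i) => W' i p.1 p.2 ≠ W i p.1 p.2)).card : ℝ)
        ≤ ε * m i * m (i + 1)) :
    0 ≤ 2 * ((ℓ : ℝ) + 1) * ε * ∏ i ∈ Finset.range (ℓ + 1), (m i : ℝ) :=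
  (abs_nonneg _).trans (outVal_diff_le ℓ m hm W W' hW hW' ε hc
    (fun _ => false))


/-- If the multilayer ReLU network `(W 0, …, W ℓ)` (single output) is
`(ε, δ)`-close to computing the constant 0-function, then for at least a `(1−δ)`-fraction
of the inputs the output value is at most `2·(ℓ+1)·ε·∏_{i=0}^ℓ m i`; if it is
`(ε, δ)`-close to computing the OR-function, then for at least a `(1−δ)`-fraction of the
inputs the output value is at least `−2·(ℓ+1)·ε·∏_{i=0}^ℓ m i`. -/
theorem close_multilayer_output_bound (ℓ : ℕ) (hℓ : 1 ≤ ℓ) (m : ℕ → ℕ) (hm : m (ℓ + 1) = 1)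
    (W : ∀ i : ℕ, Matrix (Fin (m (i + 1))) (Fin (m i)) ℝ)
    (hW : ∀ i ≤ ℓ, ∀ j k, |W i j k| ≤ 1)
    (ε δ : ℝ) :
    (IsCloseML ℓ m W ε δ (fun _ => false) →
      (1 - δ) * 2 ^ (m 0) ≤
        ((Finset.univ.filter (fun x : Fin (m 0) → Bool =>
          outVal ℓ m W x ≤
            2 * ((ℓ : ℝ) + 1) * ε * ∏ i ∈ Finset.range (ℓ + 1), (m i : ℝ))).card : ℝ)) ∧
    (IsCloseML ℓ m W ε δ (fun x => decide (∃ i, x i = true)) →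
      (1 - δ) * 2 ^ (m 0) ≤
        ((Finset.univ.filter (fun x : Fin (m 0) → Bool =>
          -(2 * ((ℓ : ℝ) + 1) * ε * ∏ i ∈ Finset.range (ℓ + 1), (m i : ℝ))
            ≤ outVal ℓ m W x)).card : ℝ)) := by
  constructor
  · rintro ⟨W', hb, hc, hd⟩
    refine count_helper δ _ _ hd ?_
    intro x hx
    simp only [Finset.mem_filter, Finset.mem_univ, true_and, not_and, not_not] at hx ⊢
    have hv' : ¬ (0 < outVal ℓ m W' x) := of_decide_eq_false hx
    have hdiff := outVal_diff_le ℓ m hm W W' hW hb ε hc x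
    have := abs_le.mp hdiff
    linarith [this.2]
  · rintro ⟨W', hb, hc, hd⟩
    refine count_helper δ _ _ hd ?_
    intro x hx
    simp only [Finset.mem_filter, Finset.mem_univ, true_and, not_not] at hx ⊢
    have hx' := hx
    have hdiff := outVal_diff_le ℓ m hm W W' hW hb ε hc x
    have habs := abs_le.mp hdiff
    by_cases hex : ∃ i, x i = true
    · have : decide (0 < outVal ℓ m W' x) = true := by rw [hx']; simpa using hex
      have hv' : 0 < outVal ℓ m W' x := of_decide_eq_true this
      linarith [habs.1]
    · have hall : ∀ i, x i = false := by
        intro i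
        by_contra h
        exact hex ⟨i, by simpa using h⟩
      rw [outVal_zero ℓ m W x hall]
      have := diff_nonneg_bound ℓ m hm W W' hW hb ε hc
      linarith
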